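/- Let S be a finitely generated algebra over a commutative perfect ring R, and let I be a proper ideal of S. Then the nilradical of S/I is T-nilpotent; that is, for every sequence a_1, a_2, ... of elements of the radical √I, there exists m > 0 with a_1 a_2 ··· a_m ∈ I. -/

import Mathlib

/-- Descending chain condition on finitely generated ideals (one characterization
of commutative perfect rings). -/
def DCCFGIdeals (R : Type*) [CommRing R] : Prop :=
  ∀ I : ℕ → Ideal R, (∀ m, (I m).FG) → (∀ m, I (m + 1) ≤ I m) →
    ∃ N, ∀ m, N ≤ m → I m = I N


section aux
variable {R : Type*} [CommRing R]

lemma DCCFGIdeals.quotient (h : DCCFGIdeals R) (K : Ideal R) : DCCFGIdeals (R ⧸ K) := by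
  intro I hfg hdesc
  set π := Ideal.Quotient.mk K with hπ
  have hsurj : Function.Surjective π := Ideal.Quotient.mk_surjective
  have key : ∀ (B : Ideal R) (I' : Ideal (R ⧸ K)), I'.FG → I' ≤ Ideal.map π B →
      ∃ B' : Ideal R, B'.FG ∧ B' ≤ B ∧ Ideal.map π B' = I' := by
    intro B I' hI'fg hle
    obtain ⟨T, hT⟩ := hI'fg
    have hmem : ∀ t : T, (t : R ⧸ K) ∈ Ideal.map π B := by
      intro t
      exact hle (hT ▸ Ideal.subset_span t.2)
    choose g hg1 hg2 using fun t : T =>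
      (Ideal.mem_map_iff_of_surjective π hsurj).mp (hmem t)
    refine ⟨Ideal.span (Set.range g), ?_, ?_, ?_⟩
    · exact Submodule.fg_span (Set.finite_range g)
    · exact Ideal.span_le.mpr (Set.range_subset_iff.mpr hg1)
    · rw [Ideal.map_span, ← Set.range_comp]
      have : Set.range (π ∘ g) = (T : Set (R ⧸ K)) := by
        ext x
        constructor
        · rintro ⟨t, rfl⟩
          rw [Function.comp_apply, hg2 t]; exact t.2
        · intro hx
          exact ⟨⟨x, hx⟩, hg2 ⟨x, hx⟩⟩
      rw [this, hT]
  let F : (m : ℕ) → {B : Ideal R // B.FG ∧ Ideal.map π B = I m} :=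
    Nat.rec
      (⟨_, (key ⊤ (I 0) (hfg 0) (by rw [Ideal.map_top]; exact le_top)).choose_spec.1,
        (key ⊤ (I 0) (hfg 0) (by rw [Ideal.map_top]; exact le_top)).choose_spec.2.2⟩)
      (fun m p =>
        ⟨_, (key p.1 (I (m+1)) (hfg (m+1)) (by rw [p.2.2]; exact hdesc m)).choose_spec.1,
          (key p.1 (I (m+1)) (hfg (m+1)) (by rw [p.2.2]; exact hdesc m)).choose_spec.2.2⟩)
  have hFdesc : ∀ m, (F (m+1)).1 ≤ (F m).1 := fun m =>
    (key (F m).1 (I (m+1)) (hfg (m+1)) (by rw [(F m).2.2]; exact hdesc m)).choose_spec.2.1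
  obtain ⟨N, hN⟩ := h (fun m => (F m).1) (fun m => (F m).2.1) hFdesc
  refine ⟨N, fun m hm => ?_⟩
  rw [← (F m).2.2, ← (F N).2.2, hN m hm]

end aux


section aux2
variable {R : Type*} [CommRing R]

lemma vnr_of_pow (hjac : Ideal.jacobson (⊥ : Ideal R) = ⊥) (a : R) (n : ℕ) (hn : 1 ≤ n)
    (s : R) (hs : a ^ n = a ^ (n + 1) * s) : ∃ t, a = a * a * t := by
  have hiter : ∀ k, a ^ n = a ^ (n + k) * s ^ k := by
    intro k
    induction k with
    | zero => simp
    | succ k ih =>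
      calc a ^ n = a ^ (n + k) * s ^ k := ih
        _ = a ^ k * (a ^ n) * s ^ k := by rw [pow_add]; ring
        _ = a ^ k * (a ^ (n+1) * s) * s ^ k := by rw [← hs]
        _ = a ^ (n + (k+1)) * s ^ (k+1) := by rw [pow_add, pow_add, pow_add, pow_add]; ring
  set e := a ^ n * s ^ n with he
  have hae : a ^ n * e = a ^ n := by
    rw [he]
    calc a ^ n * (a ^ n * s ^ n) = a ^ (n + n) * s ^ n := by rw [pow_add]; ring
      _ = a ^ n := (hiter n).symm
  have hnil : (a - a * e) ^ n = 0 := by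
    have h1e : (1 - e) ^ n = 1 - e := by
      have hee : (1 - e) * (1 - e) = 1 - e := by
        have : e * e = e := by
          calc e * e = a ^ n * e * (s ^ n) := by rw [he]; ring
            _ = a ^ n * s ^ n := by rw [hae]
            _ = e := he.symm
        calc (1 - e) * (1 - e) = 1 - 2 * e + e * e := by ring
          _ = 1 - 2 * e + e := by rw [this]
          _ = 1 - e := by ring
      obtain ⟨k, rfl⟩ : ∃ k, n = k + 1 := ⟨n - 1, by omega⟩
      have pow_idem : ∀ (x : R), x * x = x → ∀ j, x ^ (j + 1) = x := by
        intro x hx j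
        induction j with
        | zero => simp
        | succ j ih => rw [pow_succ, ih, hx]
      exact pow_idem _ hee k
    have h2 : a - a * e = a * (1 - e) := by ring
    rw [h2, mul_pow, h1e, mul_sub, mul_one, hae, sub_self]
  have hz : a - a * e = 0 := by
    have : a - a * e ∈ Ideal.jacobson (⊥ : Ideal R) :=
      Ideal.radical_le_jacobson (Ideal.mem_radical_iff.mpr ⟨n, by rw [hnil]; exact (⊥ : Ideal R).zero_mem⟩)
    rw [hjac] at this
    exact Ideal.mem_bot.mp this
  obtain ⟨k, rfl⟩ : ∃ k, n = k + 1 := ⟨n - 1, by omega⟩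
  refine ⟨a ^ k * s ^ (k+1), ?_⟩
  have : a = a * e := by linear_combination hz
  calc a = a * e := this
    _ = a * (a ^ (k+1) * s ^ (k+1)) := by rw [he]
    _ = a * a * (a ^ k * s ^ (k+1)) := by rw [pow_succ]; ring

/-- In a ring satisfying DCC on f.g. ideals with trivial Jacobson radical,
every element is von Neumann regular. -/
lemma vnr_of_dcc (h : DCCFGIdeals R) (hjac : Ideal.jacobson (⊥ : Ideal R) = ⊥) (a : R) :
    ∃ t, a = a * a * t := by
  obtain ⟨N, hN⟩ := h (fun m => Ideal.span {a ^ (m + 1)}) (fun m => ⟨{a ^ (m+1)}, by simp⟩)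
    (fun m => Ideal.span_le.mpr (by
      simp only [Set.singleton_subset_iff, SetLike.mem_coe]
      exact Ideal.mem_span_singleton.mpr ⟨a, by rw [← pow_succ]⟩))
  have hmem : a ^ (N + 1) ∈ Ideal.span {a ^ (N + 2)} := by
    have h2 := hN (N + 1) (by omega)
    rw [show N + 2 = N + 1 + 1 from rfl, h2]
    exact Ideal.subset_span rfl
  obtain ⟨s, hs⟩ := Ideal.mem_span_singleton.mp hmem
  exact vnr_of_pow hjac a (N + 1) (by omega) s hs

end aux2


section aux3
variable {R : Type*} [CommRing R]

lemma span_idem_of_fg (hvnr : ∀ a : R, ∃ t, a = a * a * t) :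
    ∀ A : Ideal R, A.FG → ∃ e : R, e * e = e ∧ A = Ideal.span {e} := by
  have single : ∀ a : R, ∃ e : R, e * e = e ∧ Ideal.span {a} = Ideal.span {e} := by
    intro a
    obtain ⟨t, ht⟩ := hvnr a
    refine ⟨a * t, ?_, le_antisymm ?_ ?_⟩
    · calc a * t * (a * t) = (a * a * t) * t := by ring
        _ = a * t := by rw [← ht]
    · refine Ideal.span_le.mpr ?_
      simp only [Set.singleton_subset_iff, SetLike.mem_coe]
      exact Ideal.mem_span_singleton.mpr ⟨a, by linear_combination ht⟩
    · refine Ideal.span_le.mpr ?_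
      simp only [Set.singleton_subset_iff, SetLike.mem_coe]
      exact Ideal.mem_span_singleton.mpr ⟨t, rfl⟩
  have pair : ∀ e f : R, e * e = e → f * f = f →
      ∃ g : R, g * g = g ∧ Ideal.span {e} ⊔ Ideal.span {f} = Ideal.span {g} := by
    intro e f he hf
    refine ⟨e + f - e * f, ?_, le_antisymm ?_ ?_⟩
    · calc (e + f - e * f) * (e + f - e * f)
          = (e*e) + (f*f) + (e*e)*(f*f) + 2*(e*f) - 2*((e*e)*f) - 2*(e*(f*f)) := by ring
        _ = e + f - e * f := by rw [he, hf]; ring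
    · refine sup_le ?_ ?_ <;> refine Ideal.span_le.mpr ?_ <;>
        simp only [Set.singleton_subset_iff, SetLike.mem_coe]
      · exact Ideal.mem_span_singleton.mpr ⟨e, by rw [show (e+f-e*f)*e = e*e + f*e - (e*e)*f from by ring, he]; ring⟩
      · exact Ideal.mem_span_singleton.mpr ⟨f, by rw [show (e+f-e*f)*f = e*f + f*f - e*(f*f) from by ring, hf]; ring⟩
    · refine Ideal.span_le.mpr ?_
      simp only [Set.singleton_subset_iff, SetLike.mem_coe]
      have h0 : e + f - e * f = e + (f - e * f) := by ring
      rw [h0]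
      refine Submodule.add_mem _ ?_ ?_
      · exact Ideal.mem_sup_left (Ideal.subset_span rfl)
      · have : f - e * f = (1 - e) * f := by ring
        rw [this]
        exact Ideal.mem_sup_right (Ideal.mul_mem_left _ _ (Ideal.subset_span rfl))
  intro A hA
  obtain ⟨T, rfl⟩ := hA
  classical
  induction T using Finset.induction_on with
  | empty =>
    refine ⟨0, by ring, ?_⟩
    rw [Finset.coe_empty, Ideal.span_empty]
    exact (Ideal.span_eq_bot.mpr (fun x hx => hx)).symm
  | insert _ _ hx ih =>
    rename_i x T'
    obtain ⟨e, he, hspan⟩ := ih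
    obtain ⟨f, hf, hfspan⟩ := single x
    obtain ⟨g, hg, hgspan⟩ := pair f e hf he
    refine ⟨g, hg, ?_⟩
    rw [Finset.coe_insert, Ideal.span_insert, hspan, hfspan, hgspan]

lemma compl_mono {e f : R} (hf : f * f = f)
    (hle : Ideal.span {e} ≤ Ideal.span ({f} : Set R)) :
    Ideal.span {1 - f} ≤ Ideal.span ({1 - e} : Set R) := by
  obtain ⟨x, hx⟩ := Ideal.mem_span_singleton.mp (hle (Ideal.subset_span rfl))
  have hef : e * f = e := by
    calc e * f = (f * f) * x := by rw [hx]; ring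
      _ = f * x := by rw [hf]
      _ = e := hx.symm
  refine Ideal.span_le.mpr ?_
  simp only [Set.singleton_subset_iff, SetLike.mem_coe]
  exact Ideal.mem_span_singleton.mpr ⟨1 - f, by rw [show (1-e)*(1-f) = 1 - f - (e - e*f) from by ring, hef]; ring⟩


lemma noetherian_of_dcc_jac (h : DCCFGIdeals R) (hjac : Ideal.jacobson (⊥ : Ideal R) = ⊥) :
    IsNoetherianRing R := by
  rw [isNoetherianRing_iff_ideal_fg]
  intro A
  by_contra hA
  have hvnr := vnr_of_dcc h hjac
  have step : ∀ B : Ideal R, B.FG → B ≤ A → ∃ x, x ∈ A ∧ x ∉ B := by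
    intro B hB hBA
    by_contra hc
    push_neg at hc
    exact hA (by rwa [le_antisymm hBA hc] at hB)
  let F : ℕ → {B : Ideal R // B.FG ∧ B ≤ A} :=
    Nat.rec ⟨⊥, ⟨∅, by simp⟩, bot_le⟩
      (fun m p =>
        ⟨p.1 ⊔ Ideal.span {(step p.1 p.2.1 p.2.2).choose},
         Submodule.FG.sup p.2.1 ⟨{(step p.1 p.2.1 p.2.2).choose}, by simp⟩,
         sup_le p.2.2 (Ideal.span_le.mpr (by
           simp only [Set.singleton_subset_iff, SetLike.mem_coe]
           exact (step p.1 p.2.1 p.2.2).choose_spec.1))⟩)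
  have hsucc : ∀ m, (F (m+1)).1 =
      (F m).1 ⊔ Ideal.span {(step (F m).1 (F m).2.1 (F m).2.2).choose} := fun m => rfl
  have hlt : ∀ m, (F m).1 < (F (m+1)).1 := by
    intro m
    have hx := (step (F m).1 (F m).2.1 (F m).2.2).choose_spec
    rw [hsucc m]
    refine lt_of_le_of_ne le_sup_left (fun heq => ?_)
    refine hx.2 ?_
    have hm : (step (F m).1 (F m).2.1 (F m).2.2).choose ∈
        (F m).1 ⊔ Ideal.span {(step (F m).1 (F m).2.1 (F m).2.2).choose} :=
      Ideal.mem_sup_right (Ideal.subset_span (Set.mem_singleton _))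
    rwa [← heq] at hm
  choose e he hspan using fun m => span_idem_of_fg hvnr (F m).1 (F m).2.1
  obtain ⟨N, hN⟩ := h (fun m => Ideal.span {1 - e m})
    (fun m => ⟨{1 - e m}, by simp⟩)
    (fun m => compl_mono (he (m+1)) (by
      rw [← hspan m, ← hspan (m+1)]
      exact (hlt m).le))
  have heq := hN (N + 1) (by omega)
  have h2 : Ideal.span {e (N+1)} ≤ Ideal.span ({e N} : Set R) := by
    have := compl_mono (e := 1 - e N) (f := 1 - e (N+1))
      (by rw [show (1 - e (N+1)) * (1 - e (N+1)) = 1 - 2 * (e (N+1)) + e (N+1) * e (N+1) from by ring, he (N+1)]; ring)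
      (le_of_eq heq.symm)
    rwa [sub_sub_cancel, sub_sub_cancel] at this
  exact absurd ((hspan (N+1)) ▸ (hspan N) ▸ h2) (not_le_of_gt (hlt N))

end aux3

section aux4
variable {R : Type*} [CommRing R]

lemma jac_quot : Ideal.jacobson (⊥ : Ideal (R ⧸ Ideal.jacobson (⊥ : Ideal R))) = ⊥ := by
  set J := Ideal.jacobson (⊥ : Ideal R) with hJ
  have h := Ideal.map_jacobson_of_surjective (f := Ideal.Quotient.mk J)
    Ideal.Quotient.mk_surjective (I := J) (le_of_eq Ideal.mk_ker)
  rw [Ideal.map_quotient_self] at h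
  rw [← h]
  show Ideal.map (Ideal.Quotient.mk J) (Ideal.jacobson (Ideal.jacobson ⊥)) = ⊥
  rw [Ideal.jacobson_idem, Ideal.map_quotient_self]

end aux4

theorem stmt_7 {R : Type*} [CommRing R] {S : Type*} [CommRing S] [Algebra R S]
    (hperf : DCCFGIdeals R) (hfg : Algebra.FiniteType R S)
    (I : Ideal S) (hI : I ≠ ⊤)
    (a : ℕ → S) (ha : ∀ i, a i ∈ I.radical) :
    ∃ m > 0, ∏ i ∈ Finset.range m, a i ∈ I := by
  classical
  set J := Ideal.jacobson (⊥ : Ideal R) with hJ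
  set f := algebraMap R S with hf
  set JS := Ideal.map f J with hJS
  set Q := I ⊔ JS with hQ
  set πQ := Ideal.Quotient.mk Q with hπQ
  -- R ⧸ J is Noetherian
  have hnoethR' : IsNoetherianRing (R ⧸ J) :=
    noetherian_of_dcc_jac (hperf.quotient J) jac_quot
  -- S ⧸ Q is a finite type algebra over R ⧸ J
  have hker : ∀ r ∈ J, algebraMap R (S ⧸ Q) r = 0 := by
    intro r hr
    rw [IsScalarTower.algebraMap_apply R S (S ⧸ Q), Ideal.Quotient.algebraMap_eq]
    refine Ideal.Quotient.eq_zero_iff_mem.mpr ?_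
    exact le_sup_right (α := Ideal S) (Ideal.mem_map_of_mem f hr)
  let φ : R ⧸ J →+* S ⧸ Q := Ideal.Quotient.lift J (algebraMap R (S ⧸ Q)) hker
  letI : Algebra (R ⧸ J) (S ⧸ Q) := φ.toAlgebra
  letI : IsScalarTower R (R ⧸ J) (S ⧸ Q) :=
    IsScalarTower.of_algebraMap_eq (fun x => (Ideal.Quotient.lift_mk J _ _).symm)
  haveI hU1 : Algebra.FiniteType R (S ⧸ Q) :=
    hfg.of_surjective (Ideal.Quotient.mkₐ R Q) (Ideal.Quotient.mkₐ_surjective R Q)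
  haveI hU2 : Algebra.FiniteType (R ⧸ J) (S ⧸ Q) :=
    Algebra.FiniteType.of_restrictScalars_finiteType R (R ⧸ J) (S ⧸ Q)
  haveI hUnoeth : IsNoetherianRing (S ⧸ Q) :=
    Algebra.FiniteType.isNoetherianRing (R ⧸ J) (S ⧸ Q)
  -- nilradical power bound
  obtain ⟨n0, hn0⟩ := Ideal.exists_radical_pow_le_of_fg (⊥ : Ideal (S ⧸ Q))
    (IsNoetherian.noetherian _)
  set n := max n0 1 with hn
  have hn1 : 1 ≤ n := le_max_right _ _
  have hrad : (Ideal.radical (⊥ : Ideal (S ⧸ Q))) ^ n ≤ ⊥ :=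
    le_trans (Ideal.pow_le_pow_right (le_max_left _ _)) hn0
  -- each block of n consecutive elements multiplies into Q
  have hblock : ∀ t : ℕ, (∏ i ∈ Finset.Ico (n*t) (n*t+n), a i) ∈ Q := by
    intro t
    have hmem : ∀ i, πQ (a i) ∈ Ideal.radical (⊥ : Ideal (S ⧸ Q)) := by
      intro i
      obtain ⟨k, hk⟩ := ha i
      refine Ideal.mem_radical_iff.mpr ⟨k, ?_⟩
      rw [← map_pow, Ideal.mem_bot]
      exact Ideal.Quotient.eq_zero_iff_mem.mpr (le_sup_left (α := Ideal S) hk)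
    have h1 : πQ (∏ i ∈ Finset.Ico (n*t) (n*t+n), a i)
        ∈ (Ideal.radical (⊥ : Ideal (S ⧸ Q))) ^ n := by
      rw [map_prod]
      have h2 := Ideal.prod_mem_prod (s := Finset.Ico (n*t) (n*t+n))
        (I := fun _ => Ideal.radical (⊥ : Ideal (S ⧸ Q)))
        (x := fun i => πQ (a i)) (fun i _ => hmem i)
      rwa [Finset.prod_const, Nat.card_Ico, show n*t+n - n*t = n from by omega] at h2
    have h3 := hrad h1
    rw [Ideal.mem_bot] at h3
    exact Ideal.Quotient.eq_zero_iff_mem.mp h3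
  -- decompose blocks
  have hdec : ∀ t : ℕ, ∃ c ∈ I, ∃ d ∈ JS, c + d = ∏ i ∈ Finset.Ico (n*t) (n*t+n), a i :=
    fun t => Submodule.mem_sup.mp (hblock t)
  choose c hc d hd hcd using hdec
  -- finitely generated subideals of J capturing each d t
  have hBex : ∀ t, ∃ B : Ideal R, B.FG ∧ B ≤ J ∧ d t ∈ Ideal.map f B := by
    intro t
    have hd' : d t ∈ Ideal.span (⇑f '' (J : Set R)) := hd t
    obtain ⟨T, hTsub, hTmem⟩ := Submodule.mem_span_finite_of_mem_span hd'
    choose j hj1 hj2 using fun y : T => hTsub y.2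
    refine ⟨Ideal.span (Set.range j), Submodule.fg_span (Set.finite_range j),
      Ideal.span_le.mpr (Set.range_subset_iff.mpr hj1), ?_⟩
    rw [Ideal.map_span]
    refine Ideal.span_mono ?_ hTmem
    intro y hy
    exact ⟨j ⟨y, hy⟩, ⟨⟨y, hy⟩, rfl⟩, hj2 ⟨y, hy⟩⟩
  choose B hBfg hBJ hdB using hBex
  -- the descending chain of products
  set A : ℕ → Ideal R := fun m => ∏ t ∈ Finset.range m, B t with hA
  have hAfg : ∀ m, (A m).FG := by
    intro m
    induction m with
    | zero =>
      simp only [hA, Finset.range_zero, Finset.prod_empty, Ideal.one_eq_top]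
      exact ⟨{1}, by rw [Finset.coe_singleton, Ideal.span_singleton_one]⟩
    | succ m ih =>
      simp only [hA, Finset.prod_range_succ] at ih ⊢
      exact Submodule.FG.mul ih (hBfg m)
  have hAdesc : ∀ m, A (m+1) ≤ A m := by
    intro m
    simp only [hA, Finset.prod_range_succ]
    exact Ideal.mul_le_left
  obtain ⟨N0, hN0⟩ := hperf A hAfg hAdesc
  set N := max N0 1 with hN
  have hN1 : 1 ≤ N := le_max_right _ _
  have hstab : A N = A (N+1) := by
    rw [hN0 N (le_max_left _ _), hN0 (N+1) ((le_max_left _ _).trans (Nat.le_succ N))]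
  -- Nakayama
  have hbot : A N = ⊥ := by
    refine Submodule.eq_bot_of_le_smul_of_le_jacobson_bot J (A N) (hAfg N) ?_ le_rfl
    have h1 : A N ≤ A N * B N := by
      have h1' : A (N+1) = A N * B N := by simp only [hA, Finset.prod_range_succ]
      exact le_of_eq (hstab.trans h1')
    have h2 : A N * B N ≤ A N * J := Ideal.mul_mono_right (hBJ N)
    rw [Ideal.smul_eq_mul, mul_comm]
    exact le_trans h1 h2
  -- the product of the d's vanishes
  have hd0 : (∏ t ∈ Finset.range N, d t) = 0 := by
    have hmapA : ∀ m, Ideal.map f (A m) = ∏ t ∈ Finset.range m, Ideal.map f (B t) := by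
      intro m
      induction m with
      | zero =>
        simp only [hA, Finset.range_zero, Finset.prod_empty, Ideal.one_eq_top, Ideal.map_top]
      | succ m ih =>
        simp only [hA, Finset.prod_range_succ] at ih ⊢
        rw [Ideal.map_mul, ih]
    have h1 : (∏ t ∈ Finset.range N, d t) ∈ Ideal.map f (A N) := by
      rw [hmapA N]
      exact Ideal.prod_mem_prod (fun t _ => hdB t)
    rw [hbot, Ideal.map_bot, Ideal.mem_bot] at h1
    exact h1
  -- congruence mod I
  have hcong : ∀ m, (∏ t ∈ Finset.range m, (c t + d t)) - (∏ t ∈ Finset.range m, d t) ∈ I := by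
    intro m
    induction m with
    | zero => simp only [Finset.range_zero, Finset.prod_empty, sub_self]; exact I.zero_mem
    | succ m ih =>
      have heq : (∏ t ∈ Finset.range (m+1), (c t + d t)) - (∏ t ∈ Finset.range (m+1), d t)
          = (∏ t ∈ Finset.range m, (c t + d t)) * c m
            + ((∏ t ∈ Finset.range m, (c t + d t)) - (∏ t ∈ Finset.range m, d t)) * d m := by
        rw [Finset.prod_range_succ, Finset.prod_range_succ]; ring
      rw [heq]
      exact Submodule.add_mem _ (Ideal.mul_mem_left _ _ (hc m)) (Ideal.mul_mem_right _ _ ih)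
  have hPI : (∏ t ∈ Finset.range N, (c t + d t)) ∈ I := by
    have h1 := hcong N
    rwa [hd0, sub_zero] at h1
  -- rewrite the product of blocks as one big product
  have hblocks : ∀ m, (∏ t ∈ Finset.range m, ∏ i ∈ Finset.Ico (n*t) (n*t+n), a i)
      = ∏ i ∈ Finset.range (n*m), a i := by
    intro m
    induction m with
    | zero => simp
    | succ m ih =>
      rw [Finset.prod_range_succ, ih, Finset.range_eq_Ico, Finset.range_eq_Ico, Nat.mul_succ]
      exact Finset.prod_Ico_consecutive _ (Nat.zero_le _) (Nat.le_add_right _ _)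
  refine ⟨n*N, Nat.mul_pos (by omega) (by omega), ?_⟩
  rw [← hblocks N]
  have hfinal : (∏ t ∈ Finset.range N, ∏ i ∈ Finset.Ico (n*t) (n*t+n), a i)
      = ∏ t ∈ Finset.range N, (c t + d t) :=
    Finset.prod_congr rfl (fun t _ => (hcd t).symm)
  rw [hfinal]
  exact hPI
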